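/- Let A be a commutative ring, finite-dimensional as an algebra over a field K of characteristic zero, and suppose A ≅ E₁ × ⋯ × E_r is a product of finite field extensions of K. An element x = (x₁, ..., x_r) ∈ A generates A as a K-algebra if and only if each x_i generates E_i over K and the minimal polynomials of x₁, ..., x_r over K are pairwise coprime (equivalently, pairwise distinct, since they are irreducible). -/

import Mathlib

open Polynomial

/-- An element `x = (x₁, …, x_r)` of a finite product of finite field extensions of a
characteristic-zero field `K` generates the product as a `K`-algebra if and only if each
`x_i` generates `E_i` over `K` and the minimal polynomials of the `x_i` are pairwise
coprime. -/
theorem generates_prod_iff_components_generate_and_minpoly_coprime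
    (K : Type) [Field K] [CharZero K]
    (r : ℕ) (E : Fin r → Type)
    [∀ i, Field (E i)] [∀ i, Algebra K (E i)] [∀ i, FiniteDimensional K (E i)]
    (x : (i : Fin r) → E i) :
    Algebra.adjoin K {x} = ⊤ ↔
      (∀ i, Algebra.adjoin K {x i} = ⊤) ∧
        Pairwise fun i j => IsCoprime (minpoly K (x i)) (minpoly K (x j)) := by
  classical
  have hint : ∀ i, IsIntegral K (x i) := fun i => Algebra.IsIntegral.isIntegral _
  have hcomp : ∀ (q : K[X]) (i : Fin r),
      (Polynomial.aeval x q) i = Polynomial.aeval (x i) q := by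
    intro q i
    exact (Polynomial.aeval_algHom_apply (Pi.evalAlgHom K E i) x q).symm
  have hzero : ∀ (i : Fin r) (q : K[X]), minpoly K (x i) ∣ q →
      Polynomial.aeval (x i) q = 0 := by
    rintro i q ⟨t, rfl⟩
    rw [map_mul, minpoly.aeval, zero_mul]
  have hsurj_iff : Algebra.adjoin K {x} = ⊤ ↔
      Function.Surjective (Polynomial.aeval (R := K) x) := by
    rw [Algebra.adjoin_singleton_eq_range_aeval]; exact AlgHom.range_eq_top _
  constructor
  · intro h
    have hsurj := hsurj_iff.mp h
    refine ⟨?_, ?_⟩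
    · intro i
      have hmap := congrArg (Subalgebra.map (Pi.evalAlgHom K E i)) h
      rw [AlgHom.map_adjoin, Set.image_singleton, Algebra.map_top,
        (AlgHom.range_eq_top _).mpr (Function.surjective_eval i)] at hmap
      exact hmap
    · intro i j hij
      rw [(minpoly.irreducible (hint i)).coprime_iff_not_dvd]
      intro hdvd
      obtain ⟨q, hq⟩ := hsurj (Pi.single j 1)
      have hqi : Polynomial.aeval (x i) q = 0 := by
        rw [← hcomp q i, hq, Pi.single_eq_of_ne hij]
      have hdvd' : minpoly K (x j) ∣ q :=
        dvd_trans ((minpoly.irreducible (hint i)).dvd_symm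
          (minpoly.irreducible (hint j)) hdvd) (minpoly.dvd K (x i) hqi)
      have : Polynomial.aeval (x j) q = 0 := hzero j q hdvd'
      rw [← hcomp q j, hq, Pi.single_eq_same] at this
      exact one_ne_zero this
  · rintro ⟨hgen, hcop⟩
    rw [hsurj_iff]
    intro z
    have hsurji : ∀ i, ∃ q : K[X], Polynomial.aeval (x i) q = z i := by
      intro i
      have := (Algebra.adjoin_singleton_eq_range_aeval K (x i)) ▸ hgen i
      have hz : z i ∈ (Polynomial.aeval (R := K) (x i)).range := by
        rw [this]; trivial
      exact hz
    choose q hq using hsurji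
    -- CRT for the pairwise coprime ideals (minpoly K (x i))
    have hIcop : Pairwise (Function.onFun IsCoprime fun i =>
        Ideal.span {minpoly K (x i)}) := by
      intro i j hij
      exact (Ideal.isCoprime_span_singleton_iff _ _).mpr (hcop hij)
    obtain ⟨s, hs⟩ := Ideal.quotientInfToPiQuotient_surj hIcop
      (fun i => Ideal.Quotient.mk _ (q i))
    obtain ⟨t, rfl⟩ := Ideal.Quotient.mk_surjective s
    refine ⟨t, ?_⟩
    funext i
    have hsi := congrFun hs i
    rw [Ideal.quotientInfToPiQuotient_mk'] at hsi
    have : minpoly K (x i) ∣ t - q i := by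
      rw [← Ideal.mem_span_singleton, ← Ideal.Quotient.eq_zero_iff_mem, map_sub,
        hsi, sub_self]
    have h0 := hzero i _ this
    rw [map_sub, sub_eq_zero] at h0
    rw [hcomp t i, h0, hq]
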